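/- arXiv:2510.24326 — 3 statements merged into one kernel-verified Lean document; each statement's English description precedes it below -/
import Mathlib

section
/- Let A be a C*-algebra and let x ∈ A with 0 ≤ x. Then for every n ∈ ℕ and every selfadjoint Y ∈ Mₙ(span{x}) there exist Y₁, Y₂ ∈ Mₙ(span{x}) with 0 ≤ Y₁ and 0 ≤ Y₂ in Mₙ(A), Y = Y₁ − Y₂, and max(‖Y₁‖, ‖Y₂‖) = ‖Y‖. (Concretely, if Y has entries (a i j) • x with a a hermitian complex matrix, one may take Y₁ with entries (a₊ i j) • x and Y₂ with entries (a₋ i j) • x, where a = a₊ − a₋ is the positive/negative-part decomposition of the hermitian matrix a.) In particular, span{x} is completely 1-generated. -/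
set_option maxHeartbeats 1000000

noncomputable section


lemma real_posPart_le_abs (y : ℝ) : y⁺ ≤ |y| :=
  sup_le (le_abs_self y) (abs_nonneg y)

lemma real_negPart_le_abs (y : ℝ) : y⁻ ≤ |y| :=
  sup_le (neg_le_abs y) (abs_nonneg y)

lemma aux_norm_max {B : Type*} [NonUnitalCStarAlgebra B] [PartialOrder B] [StarOrderedRing B]
    {a : B} (ha : IsSelfAdjoint a) : max ‖a⁺‖ ‖a⁻‖ = ‖a‖ := by
  have hid : cfcₙ (id : ℝ → ℝ) a = a := cfcₙ_id ℝ a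
  refine le_antisymm (max_le ?_ ?_) ?_
  · rw [CFC.posPart_def]
    refine norm_cfcₙ_le fun y hy => ?_
    calc ‖y⁺‖ = y⁺ := by rw [Real.norm_eq_abs, abs_of_nonneg (posPart_nonneg y)]
    _ ≤ |y| := real_posPart_le_abs y
    _ = ‖y‖ := (Real.norm_eq_abs y).symm
    _ ≤ ‖cfcₙ (id : ℝ → ℝ) a‖ := norm_apply_le_norm_cfcₙ (id : ℝ → ℝ) a hy
    _ = ‖a‖ := by rw [hid]
  · rw [CFC.negPart_def]
    refine norm_cfcₙ_le fun y hy => ?_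
    calc ‖y⁻‖ = y⁻ := by rw [Real.norm_eq_abs, abs_of_nonneg (negPart_nonneg y)]
    _ ≤ |y| := real_negPart_le_abs y
    _ = ‖y‖ := (Real.norm_eq_abs y).symm
    _ ≤ ‖cfcₙ (id : ℝ → ℝ) a‖ := norm_apply_le_norm_cfcₙ (id : ℝ → ℝ) a hy
    _ = ‖a‖ := by rw [hid]
  · obtain ⟨⟨y, hy, hyn⟩, -⟩ := IsGreatest.norm_cfcₙ (id : ℝ → ℝ) a
    rw [hid] at hyn
    rw [← hyn]
    have h1 : y⁺ ≤ ‖a⁺‖ := by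
      rw [CFC.posPart_def]
      calc y⁺ = ‖y⁺‖ := by rw [Real.norm_eq_abs, abs_of_nonneg (posPart_nonneg y)]
      _ ≤ _ := norm_apply_le_norm_cfcₙ (·⁺ : ℝ → ℝ) a hy
    have h2 : y⁻ ≤ ‖a⁻‖ := by
      rw [CFC.negPart_def]
      calc y⁻ = ‖y⁻‖ := by rw [Real.norm_eq_abs, abs_of_nonneg (negPart_nonneg y)]
      _ ≤ _ := norm_apply_le_norm_cfcₙ (·⁻ : ℝ → ℝ) a hy
    have : ‖(y : ℝ)‖ = max y⁺ y⁻ := by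
      rw [Real.norm_eq_abs]
      rcases le_total 0 y with h | h
      · rw [posPart_eq_self.mpr h, negPart_eq_zero.mpr h, abs_of_nonneg h,
          max_eq_left h]
      · rw [posPart_eq_zero.mpr h, negPart_eq_neg.mpr h, abs_of_nonpos h,
          max_eq_right (neg_nonneg.mpr h)]
    simpa [this] using max_le_max h1 h2

lemma aux_orth_norm {B : Type*} [NonUnitalCStarAlgebra B] [PartialOrder B] [StarOrderedRing B]
    {p q : B} (hp : 0 ≤ p) (hq : 0 ≤ q) (hpq : p * q = 0) :
    max ‖p‖ ‖q‖ = ‖p - q‖ := by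
  obtain ⟨h1, h2⟩ := CFC.posPart_negPart_unique (a := p - q) rfl hpq hp hq
  calc max ‖p‖ ‖q‖ = max ‖(p - q)⁺‖ ‖(p - q)⁻‖ := by rw [h1, h2]
  _ = ‖p - q‖ := aux_norm_max (hp.isSelfAdjoint.sub hq.isSelfAdjoint)


/-- **Lemma 5.1 (ii).** Let `x` be a positive element of a C*-algebra `A`.
Then every selfadjoint `Y ∈ Mₙ(span{x})` decomposes as `Y = Y₁ - Y₂` with
`Y₁, Y₂ ∈ Mₙ(span{x})` positive and `max ‖Y₁‖ ‖Y₂‖ = ‖Y‖`; i.e. `span{x}` is completely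
1-generated.  (`Mₙ(A)` is realized via a family of ⋆-isomorphisms onto C*-algebras `M n`,
and `Y ∈ Mₙ(span{x})` means `Y` is the image of a matrix with entries `a i j • x`.) -/
theorem stmt_16 {A : Type*} [NonUnitalCStarAlgebra A] [PartialOrder A] [StarOrderedRing A]
    (x : A) (hx : 0 ≤ x)
    (M : ℕ → Type*) [∀ n, NonUnitalCStarAlgebra (M n)] [∀ n, PartialOrder (M n)]
    [∀ n, StarOrderedRing (M n)]
    (e : ∀ n, Matrix (Fin n) (Fin n) A ≃⋆ₐ[ℂ] M n) :
    ∀ (n : ℕ) (Y : M n),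
      (∃ a : Matrix (Fin n) (Fin n) ℂ, Y = (e n) (Matrix.of fun i j => a i j • x)) →
      star Y = Y →
      ∃ Y₁ Y₂ : M n,
        (∃ a₁ : Matrix (Fin n) (Fin n) ℂ, Y₁ = (e n) (Matrix.of fun i j => a₁ i j • x)) ∧
        (∃ a₂ : Matrix (Fin n) (Fin n) ℂ, Y₂ = (e n) (Matrix.of fun i j => a₂ i j • x)) ∧
        0 ≤ Y₁ ∧ 0 ≤ Y₂ ∧ Y = Y₁ - Y₂ ∧ max ‖Y₁‖ ‖Y₂‖ = ‖Y‖ := by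
  rintro n Y ⟨a, hYa⟩ hYsa
  by_cases hx0 : x = 0
  · subst hx0
    have h0 : Y = 0 := by
      rw [hYa]
      have : (Matrix.of fun i j => a i j • (0 : A)) = 0 := by ext i j; simp
      rw [this, map_zero]
    refine ⟨0, 0, ⟨0, ?_⟩, ⟨0, ?_⟩, le_refl 0, le_refl 0, by simp [h0], by simp [h0]⟩ <;>
    · have : (Matrix.of fun i j => (0 : Matrix (Fin n) (Fin n) ℂ) i j • (0 : A)) = 0 := by
        ext i j; simp
      rw [this, map_zero]
  -- x ≠ 0
  have hxsa : IsSelfAdjoint x := .of_nonneg hx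
  -- a is hermitian
  have haH : star a = a := by
    have h1' : (e n) (star (Matrix.of fun i j => a i j • x))
        = (e n) (Matrix.of fun i j => a i j • x) := by
      rw [map_star, ← hYa, hYsa, hYa]
    have h1 : star (Matrix.of fun i j => a i j • x) = (Matrix.of fun i j => a i j • x) :=
      (e n).injective h1'
    ext i j
    have h2 := congrFun (congrFun h1 i) j
    simp only [Matrix.star_apply, Matrix.of_apply, star_smul, hxsa.star_eq] at h2
    have h3 : (star (a j i) - a i j) • x = 0 := by rw [sub_smul, h2, sub_self]
    rcases smul_eq_zero.mp h3 with h | h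
    · simpa [sub_eq_zero, Matrix.star_apply] using h
    · exact absurd h hx0
  -- positive/negative part decomposition of a with square roots
  obtain ⟨p, m, b, c, hbsa, hcsa, hbb, hcc, hpm, hpma⟩ :
      ∃ p m b c : Matrix (Fin n) (Fin n) ℂ,
        star b = b ∧ star c = c ∧ b * b = p ∧ c * c = m ∧ p * m = 0 ∧ p - m = a := by
    let g := Matrix.toEuclideanCLM (𝕜 := ℂ) (n := Fin n)
    have hT : IsSelfAdjoint (g a) := by rw [IsSelfAdjoint, ← map_star g, haH]
    set T := g a with hTdef
    have hcont1 : ContinuousOn (fun r : ℝ => Real.sqrt r⁺) (spectrum ℝ T) :=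
      (Real.continuous_sqrt.comp continuous_posPart).continuousOn
    have hcont2 : ContinuousOn (fun r : ℝ => Real.sqrt r⁻) (spectrum ℝ T) :=
      (Real.continuous_sqrt.comp continuous_negPart).continuousOn
    refine ⟨g.symm (cfc (·⁺ : ℝ → ℝ) T), g.symm (cfc (·⁻ : ℝ → ℝ) T),
      g.symm (cfc (fun r : ℝ => Real.sqrt r⁺) T), g.symm (cfc (fun r : ℝ => Real.sqrt r⁻) T),
      ?_, ?_, ?_, ?_, ?_, ?_⟩
    · set_option synthInstance.maxHeartbeats 400000 in rw [← map_star]; congr 1; exact IsSelfAdjoint.cfc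
    · set_option synthInstance.maxHeartbeats 400000 in rw [← map_star]; congr 1; exact IsSelfAdjoint.cfc
    · rw [← map_mul]; congr 1
      rw [← cfc_mul _ _ T hcont1 hcont1]
      exact cfc_congr fun r _ => Real.mul_self_sqrt (posPart_nonneg r)
    · rw [← map_mul]; congr 1
      rw [← cfc_mul _ _ T hcont2 hcont2]
      exact cfc_congr fun r _ => Real.mul_self_sqrt (negPart_nonneg r)
    · rw [← map_mul]
      have : cfc (·⁺ : ℝ → ℝ) T * cfc (·⁻ : ℝ → ℝ) T = 0 := by
        rw [← cfc_mul _ _ T]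
        calc cfc (fun r : ℝ => r⁺ * r⁻) T = cfc (fun _ : ℝ => (0 : ℝ)) T :=
              cfc_congr fun r _ => by
                rcases le_total r 0 with h | h <;>
                  simp [posPart_eq_zero.mpr, negPart_eq_zero.mpr, h]
          _ = 0 := by simp
      rw [this, map_zero]
    · rw [← map_sub]
      have : cfc (·⁺ : ℝ → ℝ) T - cfc (·⁻ : ℝ → ℝ) T = T := by
        rw [← cfc_sub (·⁺ : ℝ → ℝ) (·⁻ : ℝ → ℝ) T
          continuous_posPart.continuousOn continuous_negPart.continuousOn]
        calc cfc (fun r : ℝ => r⁺ - r⁻) T = cfc (id : ℝ → ℝ) T :=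
              cfc_congr fun r _ => by simp
          _ = T := cfc_id ℝ T
      rw [this]
      exact g.symm_apply_apply a
  -- square root of x
  set y := CFC.sqrt x with hydef
  have hyy : y * y = x := CFC.sqrt_mul_sqrt_self x hx
  have hysa : IsSelfAdjoint y := (CFC.sqrt_nonneg (a := x)).isSelfAdjoint
  -- key computation
  have key : ∀ b q : Matrix (Fin n) (Fin n) ℂ, star b = b → b * b = q →
      star (Matrix.of fun i j => b i j • y) * (Matrix.of fun i j => b i j • y)
        = Matrix.of fun i j => q i j • x := by
    intro b q hb hbq
    ext i j
    simp only [Matrix.mul_apply, Matrix.star_apply, Matrix.of_apply]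
    calc ∑ k, star (b k i • y) * (b k j • y)
        = ∑ k, (star (b k i) * b k j) • (y * y) := by
          refine Finset.sum_congr rfl fun k _ => ?_
          rw [star_smul, hysa.star_eq, smul_mul_smul_comm]
      _ = (∑ k, star (b k i) * b k j) • x := by rw [← Finset.sum_smul, hyy]
      _ = q i j • x := by
          congr 1
          calc ∑ k, star (b k i) * b k j = ∑ k, b i k * b k j := by
                refine Finset.sum_congr rfl fun k _ => ?_
                rw [show star (b k i) = (star b) i k from rfl, hb]
            _ = (b * b) i j := (Matrix.mul_apply).symm
            _ = q i j := by rw [hbq]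
  set P : Matrix (Fin n) (Fin n) A := Matrix.of fun i j => p i j • x with hPdef
  set Q : Matrix (Fin n) (Fin n) A := Matrix.of fun i j => m i j • x with hQdef
  have hpos1 : 0 ≤ (e n) P := by
    rw [hPdef, ← key b p hbsa hbb, map_mul, map_star]
    exact star_mul_self_nonneg _
  have hpos2 : 0 ≤ (e n) Q := by
    rw [hQdef, ← key c m hcsa hcc, map_mul, map_star]
    exact star_mul_self_nonneg _
  have hsub : Y = (e n) P - (e n) Q := by
    rw [← map_sub, hYa]
    congr 1
    ext i j
    have : a i j = p i j - m i j := by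
      rw [← hpma]; rfl
    simp only [Matrix.sub_apply, Matrix.of_apply, this, sub_smul, hPdef, hQdef]
  have horth : (e n) P * (e n) Q = 0 := by
    rw [← map_mul]
    have : P * Q = 0 := by
      ext i j
      simp only [Matrix.mul_apply, Matrix.of_apply, Matrix.zero_apply, hPdef, hQdef]
      calc ∑ k, (p i k • x) * (m k j • x)
          = ∑ k, (p i k * m k j) • (x * x) := by
            exact Finset.sum_congr rfl fun k _ => smul_mul_smul_comm _ _ _ _
        _ = ((p * m) i j) • (x * x) := by rw [← Finset.sum_smul]; rfl
        _ = 0 := by rw [hpm]; simp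
    rw [this, map_zero]
  exact ⟨(e n) P, (e n) Q, ⟨p, rfl⟩, ⟨m, rfl⟩, hpos1, hpos2, hsub,
    by rw [hsub]; exact aux_orth_norm hpos1 hpos2 horth⟩
end
end

section
/- Let A be a unital C*-algebra and let x ∈ A be selfadjoint with x₊ ≠ 0 and x₋ ≠ 0, so that M := ‖x₊‖ > 0 and m' := ‖x₋‖ > 0 (M = max of the spectrum of x and −m' = min of the spectrum of x). Let K be a complex Hilbert space and T ∈ B(K) selfadjoint with decomposition T = T₊ − T₋. Then there exists a continuous ℂ-linear map Ψ : C(σ(x), ℂ) → B(K) on the continuous functions on the spectrum σ(x) of x such that: Ψ is positive (if f takes nonnegative real values on σ(x) then 0 ≤ Ψ f); Ψ applied to the inclusion function σ(x) → ℂ, z ↦ z, equals T; and ‖Ψ(1)‖ = max(‖T₊‖ / M, ‖T₋‖ / m') ≤ ‖T‖ / min(M, m'). (Composing Ψ with the continuous functional calculus of x yields a positive extension to C*(x,1) of the map span{x} → B(K), x ↦ T, with the stated norm bound.) -/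
open scoped ComplexOrder

noncomputable section


section spec
variable {𝕜 B : Type*} [Field 𝕜] [Ring B] [Algebra 𝕜 B]

lemma aux_notMem_add {a b : B} (hab : a * b = 0) (hba : b * a = 0) {l : 𝕜} (hl : l ≠ 0)
    (ha : l ∉ spectrum 𝕜 a) (hb : l ∉ spectrum 𝕜 b) : l ∉ spectrum 𝕜 (a + b) := by
  rw [spectrum.notMem_iff] at *
  set R := algebraMap 𝕜 B l with hR
  obtain ⟨U, hU⟩ := ha
  obtain ⟨V, hV⟩ := hb
  set u' : B := ↑U⁻¹ with hu'
  set v' : B := ↑V⁻¹ with hv'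
  have hRR' : R * algebraMap 𝕜 B l⁻¹ = 1 := by
    rw [hR, ← map_mul, mul_inv_cancel₀ hl, map_one]
  set R' := algebraMap 𝕜 B l⁻¹ with hR'
  have hR'R : R' * R = 1 := by rw [hR', hR, ← map_mul, inv_mul_cancel₀ hl, map_one]
  have hUu' : (R - a) * u' = 1 := by rw [← hU]; exact U.mul_inv
  have hu'U : u' * (R - a) = 1 := by rw [← hU]; exact U.inv_mul
  have hVv' : (R - b) * v' = 1 := by rw [← hV]; exact V.mul_inv
  have hv'V : v' * (R - b) = 1 := by rw [← hV]; exact V.inv_mul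
  -- key identities
  have hbu' : b * u' = R' * b := by
    have h1 : b * (R - a) = R * b := by
      rw [mul_sub, hba, sub_zero, ← Algebra.commutes l b]
    have h2 : R * (b * u') = b := by
      rw [← mul_assoc, ← h1, mul_assoc, hUu', mul_one]
    calc b * u' = R' * R * (b * u') := by rw [hR'R, one_mul]
    _ = R' * b := by rw [mul_assoc, h2]
  have hav' : a * v' = R' * a := by
    have h1 : a * (R - b) = R * a := by
      rw [mul_sub, hab, sub_zero, ← Algebra.commutes l a]
    have h2 : R * (a * v') = a := by
      rw [← mul_assoc, ← h1, mul_assoc, hVv', mul_one]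
    calc a * v' = R' * R * (a * v') := by rw [hR'R, one_mul]
    _ = R' * a := by rw [mul_assoc, h2]
  have hu'b : u' * b = R' * b := by
    have h1 : (R - a) * b = R * b := by rw [sub_mul, hab, sub_zero]
    have h3 : u' * ((R - a) * b) = b := by rw [← mul_assoc, hu'U, one_mul]
    rw [h1] at h3
    have h2 : R * (u' * b) = b := by
      have h4 : R * (u' * b) = u' * (R * b) := by
        rw [← mul_assoc, Algebra.commutes l u', mul_assoc]
      exact h4.trans h3
    calc u' * b = R' * R * (u' * b) := by rw [hR'R, one_mul]
    _ = R' * b := by rw [mul_assoc, h2]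
  have hv'a : v' * a = R' * a := by
    have h1 : (R - b) * a = R * a := by rw [sub_mul, hba, sub_zero]
    have h3 : v' * ((R - b) * a) = a := by rw [← mul_assoc, hv'V, one_mul]
    rw [h1] at h3
    have h2 : R * (v' * a) = a := by
      have h4 : R * (v' * a) = v' * (R * a) := by
        rw [← mul_assoc, Algebra.commutes l v', mul_assoc]
      exact h4.trans h3
    calc v' * a = R' * R * (v' * a) := by rw [hR'R, one_mul]
    _ = R' * a := by rw [mul_assoc, h2]
  refine ⟨⟨R - (a + b), u' + v' - R', ?_, ?_⟩, rfl⟩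
  · have expand : (R - (a + b)) * (u' + v' - R')
        = ((R - a) * u' - b * u') + ((R - b) * v' - a * v') - (R * R' - a * R' - b * R') := by
      noncomm_ring
    rw [expand, hUu', hVv', hbu', hav', hRR', ← Algebra.commutes l⁻¹ a, ← Algebra.commutes l⁻¹ b]
    noncomm_ring
  · have expand : (u' + v' - R') * (R - (a + b))
        = (u' * (R - a) - u' * b) + (v' * (R - b) - v' * a) - (R' * R - R' * a - R' * b) := by
      noncomm_ring
    rw [expand, hu'U, hv'V, hu'b, hv'a, hR'R]
    noncomm_ring

lemma aux_mem_add {a b : B} (hab : a * b = 0) (hba : b * a = 0) {l : 𝕜} (hl : l ≠ 0)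
    (ha : l ∈ spectrum 𝕜 a) : l ∈ spectrum 𝕜 (a + b) := by
  by_contra hsum
  apply spectrum.notMem_iff.mpr ?_ ha
  rw [spectrum.notMem_iff] at hsum
  set R := algebraMap 𝕜 B l with hR
  obtain ⟨W, hW⟩ := hsum
  set w' : B := ↑W⁻¹ with hw'
  have hWw' : (R - (a + b)) * w' = 1 := by rw [← hW]; exact W.mul_inv
  have hw'W : w' * (R - (a + b)) = 1 := by rw [← hW]; exact W.inv_mul
  have hRR' : R * algebraMap 𝕜 B l⁻¹ = 1 := by
    rw [hR, ← map_mul, mul_inv_cancel₀ hl, map_one]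
  set R' := algebraMap 𝕜 B l⁻¹ with hR'
  have hbw : b * (R - (a + b)) = (R - (a + b)) * b := by
    rw [mul_sub, sub_mul, mul_add, add_mul, hab, hba, ← Algebra.commutes l b]
  have hbw' : b * w' = w' * b := by
    calc b * w' = w' * ((R - (a+b)) * (b * w')) := by rw [← mul_assoc, hw'W, one_mul]
    _ = w' * (b * ((R - (a+b)) * w')) := by
        have hinner : (R - (a + b)) * (b * w') = b * ((R - (a + b)) * w') := by
          rw [← mul_assoc, ← mul_assoc, ← hbw]
        rw [hinner]
    _ = w' * b := by rw [hWw', mul_one]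
  have haw : a * (R - (a + b)) = (R - (a + b)) * a := by
    rw [mul_sub, sub_mul, mul_add, add_mul, hab, hba, ← Algebra.commutes l a]
  have haw' : a * w' = w' * a := by
    calc a * w' = w' * ((R - (a+b)) * (a * w')) := by rw [← mul_assoc, hw'W, one_mul]
    _ = w' * (a * ((R - (a+b)) * w')) := by
        have hinner : (R - (a + b)) * (a * w') = a * ((R - (a + b)) * w') := by
          rw [← mul_assoc, ← mul_assoc, ← haw]
        rw [hinner]
    _ = w' * a := by rw [hWw', mul_one]
  set v : B := w' - R' * b * w' with hv
  have hRab : (R - a) * (R' * b) = b := by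
    rw [sub_mul, ← mul_assoc, hRR', one_mul, ← mul_assoc, ← Algebra.commutes l⁻¹ a,
      mul_assoc, hab, mul_zero, sub_zero]
  have key : (R - a) * v = 1 := by
    have h2 : (R - a) * w' = 1 + b * w' := by
      have hsplit : R - a = (R - (a + b)) + b := by abel
      rw [hsplit, add_mul, hWw']
    have h1 : (R - a) * v = (R - a) * w' - ((R - a) * (R' * b)) * w' := by
      rw [hv, mul_sub, ← mul_assoc, ← mul_assoc]
    rw [h1, hRab, h2]
    abel
  have hav : a * v = v * a := by
    have h4 : a * (R' * b * w') = 0 := by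
      rw [← mul_assoc, ← mul_assoc, ← Algebra.commutes l⁻¹ a, mul_assoc R' a b, hab,
        mul_zero, zero_mul]
    have h5 : (R' * b * w') * a = 0 := by
      rw [mul_assoc, ← haw', ← mul_assoc, mul_assoc R' b a, hba, mul_zero, zero_mul]
    rw [hv, mul_sub, sub_mul, h4, h5, haw']
  have hcomm : v * (R - a) = (R - a) * v := by
    calc v * (R - a) = v * R - v * a := by rw [mul_sub]
    _ = R * v - a * v := by rw [← Algebra.commutes l v, ← hav]
    _ = (R - a) * v := by rw [sub_mul]
  exact ⟨⟨R - a, v, key, hcomm.trans key⟩, rfl⟩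
end spec

lemma aux_norm_add_orth {E : Type*} [CStarAlgebra E] [PartialOrder E] [StarOrderedRing E]
    {a b : E} (ha : 0 ≤ a) (hb : 0 ≤ b) (hab : a * b = 0) (hba : b * a = 0) :
    ‖a + b‖ = max ‖a‖ ‖b‖ := by
  refine le_antisymm ?_ (max_le ?_ ?_)
  · rcases eq_or_ne (a + b) 0 with h | h
    · simp [h, le_max_iff]
    · have : Nontrivial E := nontrivial_of_ne (a + b) 0 h
      have hmem : ‖a + b‖ ∈ spectrum ℝ (a + b) :=
        CStarAlgebra.norm_mem_spectrum_of_nonneg (add_nonneg ha hb)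
      by_contra hgt
      push_neg at hgt
      have hpos : (0:ℝ) < ‖a + b‖ := norm_pos_iff.mpr h
      have hA : ‖a + b‖ ∉ spectrum ℝ a := fun hm =>
        absurd (spectrum.norm_le_norm_of_mem hm) (by
          rw [Real.norm_of_nonneg hpos.le]
          exact not_le.mpr (lt_of_le_of_lt (le_max_left _ _) hgt))
      have hB : ‖a + b‖ ∉ spectrum ℝ b := fun hm =>
        absurd (spectrum.norm_le_norm_of_mem hm) (by
          rw [Real.norm_of_nonneg hpos.le]
          exact not_le.mpr (lt_of_le_of_lt (le_max_right _ _) hgt))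
      exact aux_notMem_add hab hba hpos.ne' hA hB hmem
  · exact CStarAlgebra.norm_le_norm_of_nonneg_of_le ha (le_add_of_nonneg_right hb)
  · exact CStarAlgebra.norm_le_norm_of_nonneg_of_le hb (le_add_of_nonneg_left ha)

set_option maxHeartbeats 2000000 in
/-- **Proposition 5.4, construction.** Let `x` be a selfadjoint element of a
unital C*-algebra with nonzero positive and negative parts `xp`, `xm`, and let `T ∈ B(K)` be
selfadjoint with parts `Tp`, `Tm`.  Then there is a positive continuous linear map
`Ψ : C(σ(x), ℂ) → B(K)` with `Ψ(z ↦ z) = T` and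
`‖Ψ(1)‖ = max (‖Tp‖/‖xp‖) (‖Tm‖/‖xm‖) ≤ ‖T‖ / min ‖xp‖ ‖xm‖`. -/
theorem stmt_18 {A : Type*} [CStarAlgebra A] [PartialOrder A] [StarOrderedRing A]
    (x xp xm : A) (hx : IsSelfAdjoint x)
    (hxp : 0 ≤ xp) (hxm : 0 ≤ xm) (hsub : x = xp - xm) (horth : xp * xm = 0)
    (hxp0 : xp ≠ 0) (hxm0 : xm ≠ 0)
    (K : Type*) [NormedAddCommGroup K] [InnerProductSpace ℂ K] [CompleteSpace K]
    (T Tp Tm : K →L[ℂ] K) (hT : IsSelfAdjoint T)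
    (hTp : 0 ≤ Tp) (hTm : 0 ≤ Tm) (hTsub : T = Tp - Tm) (hTorth : Tp * Tm = 0) :
    ∃ Ψ : C(spectrum ℂ x, ℂ) →L[ℂ] (K →L[ℂ] K),
      (∀ g : C(spectrum ℂ x, ℂ), (∀ t, 0 ≤ g t) → 0 ≤ Ψ g) ∧
      Ψ ⟨fun t => (t : ℂ), continuous_subtype_val⟩ = T ∧
      ‖Ψ 1‖ = max (‖Tp‖ / ‖xp‖) (‖Tm‖ / ‖xm‖) ∧
      max (‖Tp‖ / ‖xp‖) (‖Tm‖ / ‖xm‖) ≤ ‖T‖ / min ‖xp‖ ‖xm‖ := by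
  have : Nontrivial A := nontrivial_of_ne xp 0 hxp0
  have hM : (0:ℝ) < ‖xp‖ := norm_pos_iff.mpr hxp0
  have hm : (0:ℝ) < ‖xm‖ := norm_pos_iff.mpr hxm0
  have hxp' : IsSelfAdjoint xp := .of_nonneg hxp
  have hxm' : IsSelfAdjoint xm := .of_nonneg hxm
  have hTp' : IsSelfAdjoint Tp := .of_nonneg hTp
  have hTm' : IsSelfAdjoint Tm := .of_nonneg hTm
  have hmo : xm * xp = 0 := by
    have := congrArg star horth
    simpa [star_mul, hxp'.star_eq, hxm'.star_eq] using this
  have hTmo : Tm * Tp = 0 := by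
    have := congrArg star hTorth
    simpa [star_mul, hTp'.star_eq, hTm'.star_eq] using this
  -- spectrum membership
  have hMxC : ((‖xp‖ : ℝ) : ℂ) ∈ spectrum ℂ xp := by
    simpa using spectrum.algebraMap_mem ℂ (CStarAlgebra.norm_mem_spectrum_of_nonneg hxp)
  have hMx : ((‖xp‖ : ℝ) : ℂ) ∈ spectrum ℂ x := by
    have := aux_mem_add (a := xp) (b := -xm) (by simp [horth]) (by simp [hmo])
      (Complex.ofReal_ne_zero.mpr hM.ne') hMxC
    simpa [hsub, sub_eq_add_neg] using this
  have hmxC : (-(‖xm‖ : ℝ) : ℂ) ∈ spectrum ℂ (-xm) := by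
    rw [← spectrum.neg_eq]
    have : ((‖xm‖ : ℝ) : ℂ) ∈ spectrum ℂ xm := by
      simpa using spectrum.algebraMap_mem ℂ (CStarAlgebra.norm_mem_spectrum_of_nonneg hxm)
    simpa using Set.neg_mem_neg.mpr this
  have hmx : (-(‖xm‖ : ℝ) : ℂ) ∈ spectrum ℂ x := by
    have := aux_mem_add (a := -xm) (b := xp) (by simp [hmo]) (by simp [horth])
      (by simpa using Complex.ofReal_ne_zero.mpr hm.ne') hmxC
    have hx' : -xm + xp = x := by rw [hsub]; abel
    rwa [hx'] at this
  set t1 : spectrum ℂ x := ⟨((‖xp‖ : ℝ) : ℂ), hMx⟩ with ht1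
  set t2 : spectrum ℂ x := ⟨(-(‖xm‖ : ℝ) : ℂ), hmx⟩ with ht2
  set Ψ : C(spectrum ℂ x, ℂ) →L[ℂ] (K →L[ℂ] K) :=
    ((((‖xp‖ : ℝ) : ℂ)⁻¹ • ContinuousMap.evalCLM ℂ t1).smulRight Tp) +
    ((((‖xm‖ : ℝ) : ℂ)⁻¹ • ContinuousMap.evalCLM ℂ t2).smulRight Tm) with hΨ
  have hΨapply : ∀ g : C(spectrum ℂ x, ℂ),
      Ψ g = (((‖xp‖ : ℝ) : ℂ)⁻¹ * g t1) • Tp + (((‖xm‖ : ℝ) : ℂ)⁻¹ * g t2) • Tm := by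
    intro g
    simp [hΨ, ContinuousMap.evalCLM, smul_eq_mul]
  have hcoefp : (0:ℂ) ≤ ((‖xp‖ : ℝ) : ℂ)⁻¹ := by
    rw [← Complex.ofReal_inv]
    exact Complex.zero_le_real.mpr (by positivity)
  have hcoefm : (0:ℂ) ≤ ((‖xm‖ : ℝ) : ℂ)⁻¹ := by
    rw [← Complex.ofReal_inv]
    exact Complex.zero_le_real.mpr (by positivity)
  -- norm bounds between parts of T
  have hTsq : T * T = Tp * Tp + Tm * Tm := by
    rw [hTsub, sub_mul, mul_sub, mul_sub, hTorth, hTmo]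
    noncomm_ring
  have hTpT : ‖Tp‖ ≤ ‖T‖ := by
    have h1 : ‖Tp‖ * ‖Tp‖ = ‖Tp * Tp‖ := by
      rw [← CStarRing.norm_star_mul_self (x := Tp), hTp'.star_eq]
    have h2 : ‖T‖ * ‖T‖ = ‖T * T‖ := by
      rw [← CStarRing.norm_star_mul_self (x := T), hT.star_eq]
    have h3 : Tp * Tp ≤ Tp * Tp + Tm * Tm := by
      have : (0:K →L[ℂ] K) ≤ Tm * Tm := by
        have h0 := star_mul_self_nonneg Tm
        rwa [hTm'.star_eq] at h0
      exact le_add_of_nonneg_right this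
    have h4 : (0:K →L[ℂ] K) ≤ Tp * Tp := by
      have h0 := star_mul_self_nonneg Tp
      rwa [hTp'.star_eq] at h0
    have h5 : ‖Tp * Tp‖ ≤ ‖T * T‖ := hTsq ▸ CStarAlgebra.norm_le_norm_of_nonneg_of_le h4 h3
    nlinarith [norm_nonneg Tp, norm_nonneg T]
  have hTmT : ‖Tm‖ ≤ ‖T‖ := by
    have h1 : ‖Tm‖ * ‖Tm‖ = ‖Tm * Tm‖ := by
      rw [← CStarRing.norm_star_mul_self (x := Tm), hTm'.star_eq]
    have h2 : ‖T‖ * ‖T‖ = ‖T * T‖ := by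
      rw [← CStarRing.norm_star_mul_self (x := T), hT.star_eq]
    have h3 : Tm * Tm ≤ Tp * Tp + Tm * Tm := by
      have : (0:K →L[ℂ] K) ≤ Tp * Tp := by
        have h0 := star_mul_self_nonneg Tp
        rwa [hTp'.star_eq] at h0
      exact le_add_of_nonneg_left this
    have h4 : (0:K →L[ℂ] K) ≤ Tm * Tm := by
      have h0 := star_mul_self_nonneg Tm
      rwa [hTm'.star_eq] at h0
    have h5 : ‖Tm * Tm‖ ≤ ‖T * T‖ := hTsq ▸ CStarAlgebra.norm_le_norm_of_nonneg_of_le h4 h3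
    nlinarith [norm_nonneg Tm, norm_nonneg T]
  refine ⟨Ψ, ?_, ?_, ?_, ?_⟩
  · intro g hg
    rw [hΨapply]
    exact add_nonneg (smul_nonneg (mul_nonneg hcoefp (hg t1)) hTp)
      (smul_nonneg (mul_nonneg hcoefm (hg t2)) hTm)
  · rw [hΨapply]
    have e1 : (⟨fun t => (t : ℂ), continuous_subtype_val⟩ : C(spectrum ℂ x, ℂ)) t1
        = ((‖xp‖ : ℝ) : ℂ) := rfl
    have e2 : (⟨fun t => (t : ℂ), continuous_subtype_val⟩ : C(spectrum ℂ x, ℂ)) t2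
        = (-(‖xm‖ : ℝ) : ℂ) := rfl
    rw [e1, e2, inv_mul_cancel₀ (Complex.ofReal_ne_zero.mpr hM.ne'), one_smul]
    rw [mul_neg, inv_mul_cancel₀ (Complex.ofReal_ne_zero.mpr hm.ne'), neg_one_smul]
    rw [hTsub]; abel
  · rw [hΨapply]
    simp only [ContinuousMap.one_apply, mul_one]
    rw [aux_norm_add_orth (smul_nonneg hcoefp hTp) (smul_nonneg hcoefm hTm)
      (by rw [smul_mul_assoc, mul_smul_comm, hTorth, smul_zero, smul_zero])
      (by rw [smul_mul_assoc, mul_smul_comm, hTmo, smul_zero, smul_zero])]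
    rw [norm_smul, norm_smul]
    congr 1
    · rw [norm_inv, Complex.norm_real, Real.norm_of_nonneg hM.le, inv_mul_eq_div]
    · rw [norm_inv, Complex.norm_real, Real.norm_of_nonneg hm.le, inv_mul_eq_div]
  · have hmin : (0:ℝ) < min ‖xp‖ ‖xm‖ := lt_min hM hm
    refine max_le ?_ ?_
    · exact div_le_div₀ (norm_nonneg T) hTpT hmin (min_le_left _ _)
    · exact div_le_div₀ (norm_nonneg T) hTmT hmin (min_le_right _ _)
end
end

section
/- In the C*-algebra M₂(ℂ), let A = !![1, 1; 1, 1] and B' = !![0, 0; 0, 1], and let E = span_ℂ{A, B'} (a selfadjoint subspace; A and B' are linearly independent). Define the ℂ-linear functional φ : E → ℂ by φ(α•A + β•B') = β/√2. Then: (a) ‖φ‖ = 1, where E carries the operator norm of M₂(ℂ); (b) φ is positive on E, i.e., φ(p) is a nonnegative real for every p ∈ E with 0 ≤ p (indeed {p ∈ E : 0 ≤ p} = {α•A + β•B' : α, β ∈ ℝ, α ≥ 0, β ≥ 0}); but (c) there is no positive linear functional ψ : M₂(ℂ) → ℂ with ‖ψ‖ ≤ 1 and ψ|_E = φ. Equivalently,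 there is no positive semidefinite ρ ∈ M₂(ℂ) with trace ρ = 1, Tr(ρ·A) = 0 and Tr(ρ·B') = 1/√2. -/
open scoped ComplexOrder Matrix.Norms.L2Operator

open scoped Matrix

noncomputable section

/-- Extraction of nonnegativity from positive semidefiniteness of `α•A + β•B'`. -/
lemma aux_extract {α β : ℂ}
    (h : (α • (!![1, 1; 1, 1] : Matrix (Fin 2) (Fin 2) ℂ) + β • !![0, 0; 0, 1]).PosSemidef) :
    0 ≤ α ∧ 0 ≤ β := by
  constructor
  · have := h.dotProduct_mulVec_nonneg ![1, 0]
    simpa [Matrix.mulVec, dotProduct, Fin.sum_univ_two] using this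
  · have := h.dotProduct_mulVec_nonneg ![1, -1]
    simpa [Matrix.mulVec, dotProduct, Fin.sum_univ_two] using this

lemma aux_psd {α β : ℝ} (hα : 0 ≤ α) (hβ : 0 ≤ β) :
    ((α : ℂ) • (!![1, 1; 1, 1] : Matrix (Fin 2) (Fin 2) ℂ) + (β : ℂ) • !![0, 0; 0, 1]).PosSemidef := by
  have h1 : ((α : ℂ) • (!![1, 1; 1, 1] : Matrix (Fin 2) (Fin 2) ℂ)) =
      (!![(Real.sqrt α : ℂ), (Real.sqrt α : ℂ); 0, 0])ᴴ *
        !![(Real.sqrt α : ℂ), (Real.sqrt α : ℂ); 0, 0] := by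
    ext i j
    fin_cases i <;> fin_cases j <;>
      simp [Matrix.mul_apply, Fin.sum_univ_two, ← Complex.ofReal_mul, Real.mul_self_sqrt hα]
  have h2 : ((β : ℂ) • (!![0, 0; 0, 1] : Matrix (Fin 2) (Fin 2) ℂ)) =
      (!![0, 0; 0, (Real.sqrt β : ℂ)])ᴴ * !![0, 0; 0, (Real.sqrt β : ℂ)] := by
    ext i j
    fin_cases i <;> fin_cases j <;>
      simp [Matrix.mul_apply, Fin.sum_univ_two, ← Complex.ofReal_mul, Real.mul_self_sqrt hβ]
  rw [h1, h2]
  exact (Matrix.posSemidef_conjTranspose_mul_self _).add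
    (Matrix.posSemidef_conjTranspose_mul_self _)

lemma aux_norm_one : ‖(1 : Matrix (Fin 2) (Fin 2) ℂ)‖ = 1 := by
  have h := Matrix.l2_opNorm_conjTranspose_mul_self (1 : Matrix (Fin 2) (Fin 2) ℂ)
  simp only [Matrix.conjTranspose_one, one_mul] at h
  have hne : ‖(1 : Matrix (Fin 2) (Fin 2) ℂ)‖ ≠ 0 := by
    simp [norm_ne_zero_iff]
  have h2 : ‖(1 : Matrix (Fin 2) (Fin 2) ℂ)‖ * ‖(1 : Matrix (Fin 2) (Fin 2) ℂ)‖ =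
      ‖(1 : Matrix (Fin 2) (Fin 2) ℂ)‖ * 1 := by
    rw [mul_one, ← h]
  exact mul_left_cancel₀ hne h2

/-- Lower bound for the operator norm of `α•A + β•B'`. -/
lemma aux_lb (α β : ℂ) :
    ‖β‖ / Real.sqrt 2 ≤
      ‖α • (!![1, 1; 1, 1] : Matrix (Fin 2) (Fin 2) ℂ) + β • !![0, 0; 0, 1]‖ := by
  set M : Matrix (Fin 2) (Fin 2) ℂ := α • !![1, 1; 1, 1] + β • !![0, 0; 0, 1] with hM
  set s : ℝ := (Real.sqrt 2)⁻¹ with hs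
  have hs0 : 0 < Real.sqrt 2 := by positivity
  have hs2 : Real.sqrt 2 * Real.sqrt 2 = 2 := Real.mul_self_sqrt (by norm_num)
  set x : EuclideanSpace ℂ (Fin 2) := (WithLp.equiv 2 (Fin 2 → ℂ)).symm ![(s : ℂ), -(s : ℂ)] with hx
  have hxn : ‖x‖ = 1 := by
    rw [EuclideanSpace.norm_eq]
    simp only [hx, WithLp.equiv_symm_apply, PiLp.toLp_apply, Fin.sum_univ_two, Matrix.cons_val_zero,
      Matrix.cons_val_one, Matrix.head_cons, norm_neg, Complex.norm_real]
    have hns : ‖s‖ = (Real.sqrt 2)⁻¹ := by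
      rw [Real.norm_eq_abs, hs, abs_of_nonneg (le_of_lt (inv_pos.2 hs0))]
    rw [hns, show ((Real.sqrt 2)⁻¹ ^ 2 + (Real.sqrt 2)⁻¹ ^ 2 : ℝ) = 1 from by
      field_simp; norm_num [Real.sq_sqrt], Real.sqrt_one]
  have hmv : Mᴴ *ᵥ (x : Fin 2 → ℂ) = ![0, -(starRingEnd ℂ β) * s] := by
    funext i
    fin_cases i <;>
      simp [hM, Matrix.mulVec, dotProduct, Fin.sum_univ_two, hx,
        WithLp.equiv_symm_apply, PiLp.toLp_apply, Matrix.conjTranspose_apply] <;> ring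
  have key := Matrix.l2_opNorm_mulVec Mᴴ x
  rw [Matrix.l2_opNorm_conjTranspose, hxn, mul_one] at key
  have hlhs : ‖(EuclideanSpace.equiv (Fin 2) ℂ).symm (Mᴴ *ᵥ x)‖ = ‖β‖ / Real.sqrt 2 := by
    rw [EuclideanSpace.norm_eq]
    simp only [EuclideanSpace.equiv, hmv]
    simp only [Fin.sum_univ_two, WithLp.equiv_symm_apply, PiLp.toLp_apply, Matrix.cons_val_zero,
      Matrix.cons_val_one, Matrix.head_cons]
    simp only [PiLp.continuousLinearEquiv_symm_apply, WithLp.equiv_symm_apply, PiLp.toLp_apply,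
      Matrix.cons_val_zero, Matrix.cons_val_one, Matrix.head_cons]
    rw [norm_zero, norm_mul, norm_neg]
    simp only [Complex.norm_conj, Complex.norm_real, Real.norm_eq_abs]
    rw [abs_of_nonneg (le_of_lt (inv_pos.2 hs0))]
    rw [show (0:ℝ)^2 = 0 by norm_num, zero_add, Real.sqrt_sq (by positivity)]
    rw [div_eq_mul_inv]
  rw [hlhs] at key
  exact key

/-- The matrix `(-1/√2)•A + √2•B'` is unitary, hence has norm one. -/
lemma aux_M0 :
    ‖(-((Real.sqrt 2 : ℝ) : ℂ)⁻¹) • (!![1, 1; 1, 1] : Matrix (Fin 2) (Fin 2) ℂ)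
      + ((Real.sqrt 2 : ℝ) : ℂ) • !![0, 0; 0, 1]‖ = 1 := by
  set M : Matrix (Fin 2) (Fin 2) ℂ :=
    (-((Real.sqrt 2 : ℝ) : ℂ)⁻¹) • !![1, 1; 1, 1] + ((Real.sqrt 2 : ℝ) : ℂ) • !![0, 0; 0, 1]
    with hM
  have hs2 : ((Real.sqrt 2 : ℝ) : ℂ) * ((Real.sqrt 2 : ℝ) : ℂ) = 2 := by
    rw [← Complex.ofReal_mul, Real.mul_self_sqrt (by norm_num)]
    norm_num
  have hs0 : ((Real.sqrt 2 : ℝ) : ℂ) ≠ 0 := by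
    simp [Real.sqrt_eq_zero']
  have hherm : Mᴴ = M := by
    ext i j
    fin_cases i <;> fin_cases j <;>
      simp [hM, Matrix.conjTranspose_apply, ← Complex.ofReal_inv, ← Complex.ofReal_neg]
  have hsq : M * M = 1 := by
    ext i j
    fin_cases i <;> fin_cases j <;>
      · simp [hM, Matrix.mul_apply, Fin.sum_univ_two, Matrix.one_apply]
        field_simp
        rw [sq ((Real.sqrt 2 : ℝ) : ℂ), hs2] <;> ring
  have h := Matrix.l2_opNorm_conjTranspose_mul_self M
  rw [hherm, hsq, aux_norm_one] at h
  nlinarith [norm_nonneg M]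

/-- **Example 4.18.** In `M₂(ℂ)` (with the operator norm), let
`A = !![1,1;1,1]`, `B' = !![0,0;0,1]`, `E = span{A, B'}` and let `φ : E → ℂ` be the
functional `φ(α•A + β•B') = β/√2`.  Then `‖φ‖ = 1`, `φ` is positive (and the positive cone
of `E` is `{α•A + β•B' : α, β ≥ 0}`), yet `φ` admits no contractive positive extension to
`M₂(ℂ)`; equivalently there is no density matrix `ρ` with `Tr(ρA) = 0`, `Tr(ρB') = 1/√2`. -/
theorem stmt_19
    (E : Submodule ℂ (Matrix (Fin 2) (Fin 2) ℂ))
    (hE : E = Submodule.span ℂ {!![1, 1; 1, 1], !![0, 0; 0, 1]})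
    (φ : E →L[ℂ] ℂ)
    (hφ : ∀ (α β : ℂ) (h : α • !![1, 1; 1, 1] + β • !![0, 0; 0, 1] ∈ E),
      φ ⟨α • !![1, 1; 1, 1] + β • !![0, 0; 0, 1], h⟩ = β / (Real.sqrt 2 : ℂ)) :
    -- (a) `‖φ‖ = 1`
    ‖φ‖ = 1 ∧
    -- (b) `φ` is positive on `E`
    (∀ (p : Matrix (Fin 2) (Fin 2) ℂ) (hp : p ∈ E), p.PosSemidef → 0 ≤ φ ⟨p, hp⟩) ∧
    -- (the positive cone of `E`)
    ({p : Matrix (Fin 2) (Fin 2) ℂ | p ∈ E ∧ p.PosSemidef} =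
      {m : Matrix (Fin 2) (Fin 2) ℂ | ∃ α β : ℝ, 0 ≤ α ∧ 0 ≤ β ∧
        m = (α : ℂ) • !![1, 1; 1, 1] + (β : ℂ) • !![0, 0; 0, 1]}) ∧
    -- (c) no contractive positive extension to `M₂(ℂ)`
    (¬ ∃ ψ : Matrix (Fin 2) (Fin 2) ℂ →L[ℂ] ℂ,
      (∀ p : Matrix (Fin 2) (Fin 2) ℂ, p.PosSemidef → 0 ≤ ψ p) ∧ ‖ψ‖ ≤ 1 ∧
      ∀ (p : Matrix (Fin 2) (Fin 2) ℂ) (hp : p ∈ E), ψ p = φ ⟨p, hp⟩) ∧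
    -- equivalently, no density matrix implements an extension
    (¬ ∃ ρ : Matrix (Fin 2) (Fin 2) ℂ, ρ.PosSemidef ∧ ρ.trace = 1 ∧
      (ρ * !![1, 1; 1, 1]).trace = 0 ∧ (ρ * !![0, 0; 0, 1]).trace = 1 / (Real.sqrt 2 : ℂ)) := by
  have hs0 : 0 < Real.sqrt 2 := by positivity
  have hs2 : Real.sqrt 2 * Real.sqrt 2 = 2 := Real.mul_self_sqrt (by norm_num)
  have hsC : ((Real.sqrt 2 : ℝ) : ℂ) ≠ 0 := by
    simpa using hs0.ne'
  have hAmem : (!![1, 1; 1, 1] : Matrix (Fin 2) (Fin 2) ℂ) ∈ E := by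
    rw [hE]; exact Submodule.subset_span (by simp)
  have hBmem : (!![0, 0; 0, 1] : Matrix (Fin 2) (Fin 2) ℂ) ∈ E := by
    rw [hE]; exact Submodule.subset_span (by simp)
  -- representation of elements of `E`
  have hrep : ∀ x ∈ E, ∃ α β : ℂ,
      α • (!![1, 1; 1, 1] : Matrix (Fin 2) (Fin 2) ℂ) + β • !![0, 0; 0, 1] = x := by
    intro x hx
    rw [hE] at hx
    exact Submodule.mem_span_pair.mp hx
  -- value of φ
  have hφ' : ∀ (x : Matrix (Fin 2) (Fin 2) ℂ) (hx : x ∈ E) (α β : ℂ),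
      α • (!![1, 1; 1, 1] : Matrix (Fin 2) (Fin 2) ℂ) + β • !![0, 0; 0, 1] = x →
      φ ⟨x, hx⟩ = β / (Real.sqrt 2 : ℂ) := by
    intro x hx α β hx'
    have hmem : α • (!![1, 1; 1, 1] : Matrix (Fin 2) (Fin 2) ℂ) + β • !![0, 0; 0, 1] ∈ E :=
      hx' ▸ hx
    have heq : (⟨x, hx⟩ : E) = ⟨_, hmem⟩ := Subtype.ext hx'.symm
    rw [heq, hφ]
  refine ⟨?_, ?_, ?_, ?_, ?_⟩
  · -- (a)
    apply le_antisymm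
    · apply φ.opNorm_le_bound zero_le_one
      intro x
      obtain ⟨α, β, hx'⟩ := hrep x.1 x.2
      have hval : φ x = β / (Real.sqrt 2 : ℂ) := by
        have := hφ' x.1 x.2 α β hx'
        simpa using this
      rw [one_mul, hval]
      have h1 : ‖β / ((Real.sqrt 2 : ℝ) : ℂ)‖ = ‖β‖ / Real.sqrt 2 := by
        rw [norm_div, Complex.norm_real, Real.norm_eq_abs,
          abs_of_nonneg hs0.le]
      rw [h1]
      have h2 : ‖x‖ = ‖(x : Matrix (Fin 2) (Fin 2) ℂ)‖ := rfl
      rw [h2, ← hx']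
      exact aux_lb α β
    · set M : Matrix (Fin 2) (Fin 2) ℂ :=
        (-((Real.sqrt 2 : ℝ) : ℂ)⁻¹) • !![1, 1; 1, 1] + ((Real.sqrt 2 : ℝ) : ℂ) • !![0, 0; 0, 1]
        with hM
      have hMmem : M ∈ E :=
        Submodule.add_mem E (Submodule.smul_mem E _ hAmem) (Submodule.smul_mem E _ hBmem)
      have hval : φ ⟨M, hMmem⟩ = 1 := by
        rw [hφ' M hMmem _ _ rfl, div_self hsC]
      have := φ.le_opNorm ⟨M, hMmem⟩
      rw [hval] at this
      have hnorm : ‖(⟨M, hMmem⟩ : E)‖ = 1 := aux_M0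
      rw [hnorm, mul_one, norm_one] at this
      exact this
  · -- (b)
    intro p hp hpsd
    obtain ⟨α, β, hx'⟩ := hrep p hp
    have hβ : 0 ≤ β := (aux_extract (hx' ▸ hpsd)).2
    rw [hφ' p hp α β hx']
    obtain ⟨hre, him⟩ := Complex.nonneg_iff.mp hβ
    have hβ' : β = ((β.re : ℝ) : ℂ) := Complex.ext rfl him.symm
    rw [hβ', show (((β.re : ℝ) : ℂ)) / ((Real.sqrt 2 : ℝ) : ℂ) = ((β.re / Real.sqrt 2 : ℝ) : ℂ) by
      push_cast; ring]
    rw [Complex.zero_le_real]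
    positivity
  · -- cone equality
    ext m
    constructor
    · rintro ⟨hmE, hpsd⟩
      obtain ⟨α, β, hx'⟩ := hrep m hmE
      obtain ⟨hα, hβ⟩ := aux_extract (hx' ▸ hpsd)
      obtain ⟨hare, haim⟩ := Complex.nonneg_iff.mp hα
      obtain ⟨hbre, hbim⟩ := Complex.nonneg_iff.mp hβ
      refine ⟨α.re, β.re, hare, hbre, ?_⟩
      rw [← hx', show ((α.re : ℝ) : ℂ) = α from Complex.ext rfl haim,
        show ((β.re : ℝ) : ℂ) = β from Complex.ext rfl hbim]
    · rintro ⟨α, β, hα, hβ, rfl⟩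
      exact ⟨Submodule.add_mem E (Submodule.smul_mem E _ hAmem) (Submodule.smul_mem E _ hBmem),
        aux_psd hα hβ⟩
  · -- (c)
    rintro ⟨ψ, hpos, hnorm, hext⟩
    set s : ℝ := (Real.sqrt 2)⁻¹ with hs
    have hsC' : ((s : ℝ) : ℂ) = (((Real.sqrt 2 : ℝ) : ℂ))⁻¹ := by
      push_cast [hs]; ring
    -- values of ψ on A and B'
    have hψA : ψ !![1, 1; 1, 1] = 0 := by
      rw [hext _ hAmem, hφ' _ hAmem 1 0 (by simp)]
      simp
    have hψB : ψ !![0, 0; 0, 1] = ((s : ℝ) : ℂ) := by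
      rw [hext _ hBmem, hφ' _ hBmem 0 1 (by simp), hsC']
      rw [one_div]
    -- ψ on E₁₁ is nonneg
    have hE11psd : (!![1, 0; 0, 0] : Matrix (Fin 2) (Fin 2) ℂ).PosSemidef := by
      have : (!![1, 0; 0, 0] : Matrix (Fin 2) (Fin 2) ℂ) = (!![1, 0; 0, 0])ᴴ * !![1, 0; 0, 0] := by
        ext i j; fin_cases i <;> fin_cases j <;> simp [Matrix.mul_apply, Fin.sum_univ_two]
      rw [this]; exact Matrix.posSemidef_conjTranspose_mul_self _
    have ha : 0 ≤ ψ !![1, 0; 0, 0] := hpos _ hE11psd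
    set a : ℂ := ψ !![1, 0; 0, 0] with haa
    obtain ⟨hare, haim⟩ := Complex.nonneg_iff.mp ha
    -- the PSD test matrix P
    have hPpsd : (!![1, ((s : ℝ) : ℂ); ((s : ℝ) : ℂ), 1/2] : Matrix (Fin 2) (Fin 2) ℂ).PosSemidef := by
      have hss : ((s : ℝ) : ℂ) * ((s : ℝ) : ℂ) = 1 / 2 := by
        rw [← Complex.ofReal_mul, hs]
        rw [show ((Real.sqrt 2)⁻¹ * (Real.sqrt 2)⁻¹ : ℝ) = 1/2 from by
          field_simp; norm_num [Real.sq_sqrt]]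
        norm_num
      have : (!![1, ((s : ℝ) : ℂ); ((s : ℝ) : ℂ), 1/2] : Matrix (Fin 2) (Fin 2) ℂ) =
          (!![1, ((s : ℝ) : ℂ); 0, 0])ᴴ * !![1, ((s : ℝ) : ℂ); 0, 0] := by
        ext i j
        fin_cases i <;> fin_cases j <;>
          simp [Matrix.mul_apply, Fin.sum_univ_two, Complex.conj_ofReal, hss]
      rw [this]; exact Matrix.posSemidef_conjTranspose_mul_self _
    -- decomposition of P
    have hPdec : (!![1, ((s : ℝ) : ℂ); ((s : ℝ) : ℂ), 1/2] : Matrix (Fin 2) (Fin 2) ℂ) =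
        (1 - ((s : ℝ) : ℂ)) • !![1, 0; 0, 0] + ((s : ℝ) : ℂ) • !![1, 1; 1, 1] +
          ((1/2 : ℂ) - ((s : ℝ) : ℂ)) • !![0, 0; 0, 1] := by
      ext i j
      fin_cases i <;> fin_cases j <;> simp
    have hψP : 0 ≤ (1 - ((s : ℝ) : ℂ)) * a + ((1/2 : ℂ) - ((s : ℝ) : ℂ)) * ((s : ℝ) : ℂ) := by
      have h0 := hpos _ hPpsd
      rw [hPdec, map_add, map_add, map_smul, map_smul, map_smul, hψA, hψB] at h0
      simpa [smul_eq_mul, ← haa] using h0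
    -- ψ(1) = a + s
    have hone : (1 : Matrix (Fin 2) (Fin 2) ℂ) = !![1, 0; 0, 0] + !![0, 0; 0, 1] := by
      ext i j; fin_cases i <;> fin_cases j <;> simp [Matrix.one_apply]
    have hψ1 : ψ 1 = a + ((s : ℝ) : ℂ) := by
      rw [hone, map_add, hψB, ← haa]
    have hub : ‖ψ 1‖ ≤ 1 := by
      have h1 := ψ.le_opNorm (1 : Matrix (Fin 2) (Fin 2) ℂ)
      rw [aux_norm_one, mul_one] at h1
      calc ‖ψ 1‖ = ‖ψ 1‖ := rfl
        _ ≤ ‖ψ‖ := h1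
        _ ≤ 1 := hnorm
    -- pass to real inequalities
    have hre1 : (1 - s) * a.re + (1/2 - s) * s ≥ 0 := by
      have := Complex.nonneg_iff.mp hψP
      have h := this.1
      simpa [Complex.add_re, Complex.mul_re, ← haim, Complex.ofReal_re, Complex.ofReal_im,
        Complex.sub_re, Complex.sub_im, Complex.one_re, Complex.one_im] using h
    have hre2 : a.re + s ≤ 1 := by
      rw [hψ1] at hub
      have h3 : (a + ((s : ℝ) : ℂ)).re = a.re + s := by simp
      have h4 := Complex.re_le_norm (a + ((s : ℝ) : ℂ))
      rw [h3] at h4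
      linarith
    -- numeric facts about s
    have hs_half : 1/2 < s := by
      rw [hs]
      have h2lt : Real.sqrt 2 < 2 := by nlinarith
      calc (1/2 : ℝ) = 2⁻¹ := by norm_num
        _ < (Real.sqrt 2)⁻¹ := by
          apply inv_strictAnti₀ hs0 h2lt
    have hs_lt1 : s < 1 := by
      rw [hs]
      have : 1 < Real.sqrt 2 := by nlinarith
      rw [inv_lt_one_iff₀]
      right; exact this
    have hss : s * s = 1/2 := by
      rw [hs]; field_simp; norm_num [Real.sq_sqrt]
    have har : 1/2 ≤ a.re := by
      by_contra hc
      push_neg at hc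
      nlinarith [hre1, hs_lt1, hss]
    linarith [hre2, har, hs_half]
  · -- (c')
    rintro ⟨ρ, hpsd, htr, hA, hB⟩
    have hq := hpsd.dotProduct_mulVec_nonneg ![2, 1]
    have hq' : 0 ≤ 4 * ρ 0 0 + 2 * ρ 0 1 + 2 * ρ 1 0 + ρ 1 1 := by
      simp only [Matrix.mulVec, dotProduct, Fin.sum_univ_two, Matrix.cons_val_zero,
        Matrix.cons_val_one, Matrix.head_cons, Pi.star_apply, star_ofNat, star_one,
        map_ofNat] at hq
      convert hq using 1
      ring
    have htr' : ρ 0 0 + ρ 1 1 = 1 := by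
      simpa [Matrix.trace, Fin.sum_univ_two] using htr
    have hA' : ρ 0 0 + ρ 0 1 + ρ 1 0 + ρ 1 1 = 0 := by
      have h := hA
      simp [Matrix.trace, Matrix.mul_apply, Fin.sum_univ_two] at h
      linear_combination h
    have hB' : ρ 1 1 = 1 / ((Real.sqrt 2 : ℝ) : ℂ) := by
      have h := hB
      simpa [Matrix.trace, Matrix.mul_apply, Fin.sum_univ_two] using h
    have hval : 4 * ρ 0 0 + 2 * ρ 0 1 + 2 * ρ 1 0 + ρ 1 1
        = 2 - 3 / ((Real.sqrt 2 : ℝ) : ℂ) := by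
      have hs2C : ((Real.sqrt 2 : ℝ) : ℂ) * ((Real.sqrt 2 : ℝ) : ℂ) = 2 := by
        rw [← Complex.ofReal_mul, hs2]; norm_num
      linear_combination 2 * hA' + 2 * htr' - 3 * hB'
    rw [hval] at hq'
    have hcast : ((2 - 3 * (Real.sqrt 2)⁻¹ : ℝ) : ℂ) = 2 - 3 / ((Real.sqrt 2 : ℝ) : ℂ) := by
      push_cast; ring
    rw [← hcast, Complex.zero_le_real] at hq'
    have h9 : (Real.sqrt 2) * 2 < 3 := by nlinarith
    have hpos2 : 0 < (Real.sqrt 2)⁻¹ := inv_pos.2 hs0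
    have hinv : (Real.sqrt 2)⁻¹ * Real.sqrt 2 = 1 := inv_mul_cancel₀ hs0.ne'
    nlinarith [h9, hpos2, hinv, hq']
end
end
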